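/- For positive even integers n, every antichain F of subsets of [n] of maximum cardinality C(n, n/2) equals C([n], n/2), the family of all n/2-element subsets of [n]. -/

import Mathlib

open Finset Nat

lemma choose_step {n k : ℕ} (h : 2 * k + 2 ≤ n) : n.choose k < n.choose (k + 1) := by
  have h1 := Nat.choose_succ_right_eq n k
  have hpos : 0 < n.choose k := Nat.choose_pos (by omega)
  have h2 : n.choose k * (k + 1) < n.choose k * (n - k) :=
    (Nat.mul_lt_mul_left hpos).2 (by omega)
  rw [← h1] at h2
  exact Nat.lt_of_mul_lt_mul_right h2

lemma choose_lt_middle {n r : ℕ} (heven : Even n) (hr : r ≤ n) (hne : r ≠ n / 2) :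
    n.choose r < n.choose (n / 2) := by
  obtain ⟨m, rfl⟩ := heven
  have hm : m + m = 2 * m := by ring
  have hhalf : (m + m) / 2 = m := by omega
  rw [hhalf]
  -- reduce to r < m via symmetry
  have key : ∀ s, s < m → (m + m).choose s < (m + m).choose m := by
    intro s hs
    have mono : ∀ k ≤ m, ∀ t < k, (m + m).choose t < (m + m).choose k := by
      intro k
      induction k with
      | zero => omega
      | succ k ih =>
        intro hk t ht
        have hstep : (m + m).choose k < (m + m).choose (k + 1) := choose_step (by omega)
        rcases Nat.lt_or_ge t k with h' | h'
        · exact (ih (by omega) t h').trans hstep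
        · have : t = k := by omega
          simpa [this] using hstep
    exact mono m le_rfl s hs
  rcases Nat.lt_or_ge r m with h' | h'
  · exact key r h'
  · have hlt : m + m - r < m := by omega
    rw [← Nat.choose_symm hr]
    exact key _ (by omega)

lemma sized_of_max_antichain {n : ℕ} (heven : Even n)
    (𝒜 : Finset (Finset (Fin n))) (hA : IsAntichain (· ⊆ ·) (𝒜 : Set (Finset (Fin n))))
    (hcard : 𝒜.card = n.choose (n / 2)) : ∀ A ∈ 𝒜, A.card = n / 2 := by
  by_contra h
  push_neg at h
  obtain ⟨A, hAmem, hAne⟩ := h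
  have hk : A.card ≤ n := by
    simpa using A.card_le_univ
  have hlt := choose_lt_middle heven hk hAne
  have hLYM := Finset.sum_card_slice_div_choose_le_one (𝕜 := ℚ) hA
  rw [Fintype.card_fin] at hLYM
  have hC : (0 : ℚ) < n.choose (n / 2) := by
    exact_mod_cast Nat.choose_pos (Nat.div_le_self _ _)
  have hsum : ∑ r ∈ range (n + 1), (𝒜 # r).card = 𝒜.card := by
    have := Finset.sum_card_slice 𝒜
    rw [Fintype.card_fin] at this
    rw [← this]
    apply Finset.sum_congr _ (fun _ _ => rfl)
    ext x; simp [Nat.lt_succ_iff]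
  have hstrict : (∑ r ∈ range (n + 1), ((𝒜 # r).card : ℚ) / n.choose (n / 2)) <
      ∑ r ∈ range (n + 1), ((𝒜 # r).card : ℚ) / n.choose r := by
    apply Finset.sum_lt_sum
    · intro i hi
      rw [mem_range, Nat.lt_succ_iff] at hi
      apply div_le_div_of_nonneg_left (by positivity) _ _
      · exact_mod_cast Nat.choose_pos hi
      · exact_mod_cast Nat.choose_le_middle _ _
    · refine ⟨A.card, by simp [Nat.lt_succ_iff, hk], ?_⟩
      apply div_lt_div_of_pos_left _ _ _
      · have : 0 < (𝒜 # A.card).card := Finset.card_pos.2 ⟨A, Finset.mem_slice.2 ⟨hAmem, rfl⟩⟩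
        exact_mod_cast this
      · exact_mod_cast Nat.choose_pos hk
      · exact_mod_cast hlt
  have hone : (∑ r ∈ range (n + 1), ((𝒜 # r).card : ℚ) / n.choose (n / 2)) = 1 := by
    rw [← Finset.sum_div, ← Nat.cast_sum, hsum, hcard, div_self (ne_of_gt hC)]
  linarith

theorem sperner_uniqueness_even (n : ℕ) (hn : 0 < n) (heven : Even n)
    (F : Finset (Finset ℕ))
    (hsub : ∀ A ∈ F, A ⊆ Finset.Icc 1 n)
    (hA : IsAntichain (· ⊆ ·) (F : Set (Finset ℕ)))
    (hcard : F.card = n.choose (n / 2)) :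
    F = Finset.powersetCard (n / 2) (Finset.Icc 1 n) := by
  classical
  set emb : Fin n ↪ ℕ := ⟨fun k => (k : ℕ) + 1, fun a b h => Fin.ext (by simpa using h)⟩ with hemb
  set g : Finset ℕ → Finset (Fin n) := fun A => univ.filter (fun k => (k : ℕ) + 1 ∈ A) with hg
  have hfg : ∀ A ∈ F, (g A).map emb = A := by
    intro A hAF
    ext x
    simp only [hg, hemb, Finset.mem_map, Finset.mem_filter, Finset.mem_univ, true_and,
      Function.Embedding.coeFn_mk]
    constructor
    · rintro ⟨k, hk, rfl⟩; exact hk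
    · intro hx
      have hx' := hsub A hAF hx
      rw [Finset.mem_Icc] at hx'
      exact ⟨⟨x - 1, by omega⟩, by simpa using (by omega : x - 1 + 1 = x) ▸ (by simpa [show x - 1 + 1 = x by omega] using hx), by show x - 1 + 1 = x; omega⟩
  have hgcard : ∀ A ∈ F, (g A).card = A.card := by
    intro A hAF
    calc (g A).card = ((g A).map emb).card := (Finset.card_map _).symm
      _ = A.card := by rw [hfg A hAF]
  have hgmono : ∀ A ∈ F, ∀ B ∈ F, g A ⊆ g B → A ⊆ B := by
    intro A hAF B hBF hsub' x hx
    have hx' := hsub A hAF hx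
    rw [Finset.mem_Icc] at hx'
    have hk : (⟨x - 1, by omega⟩ : Fin n) ∈ g A := by
      simp only [hg, Finset.mem_filter, Finset.mem_univ, true_and]
      simpa [show x - 1 + 1 = x by omega] using hx
    have := hsub' hk
    simpa [hg, show x - 1 + 1 = x by omega] using this
  set 𝒜 : Finset (Finset (Fin n)) := F.image g with h𝒜
  have hinj : Set.InjOn g F := by
    intro A hAF B hBF hAB
    rw [← hfg A hAF, ← hfg B hBF, hAB]
  have h𝒜card : 𝒜.card = n.choose (n / 2) := by
    rw [h𝒜, Finset.card_image_of_injOn hinj, hcard]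
  have h𝒜anti : IsAntichain (· ⊆ ·) (𝒜 : Set (Finset (Fin n))) := by
    intro x hx y hy hxy hsubxy
    simp only [h𝒜, Finset.coe_image, Set.mem_image, Finset.mem_coe] at hx hy
    obtain ⟨A, hAF, rfl⟩ := hx
    obtain ⟨B, hBF, rfl⟩ := hy
    exact hA hAF hBF (fun h => hxy (by rw [h])) (hgmono A hAF B hBF hsubxy)
  have hsized := sized_of_max_antichain heven 𝒜 h𝒜anti h𝒜card
  have hFsub : F ⊆ Finset.powersetCard (n / 2) (Finset.Icc 1 n) := by
    intro A hAF
    rw [Finset.mem_powersetCard]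
    refine ⟨hsub A hAF, ?_⟩
    rw [← hgcard A hAF]
    exact hsized (g A) (Finset.mem_image_of_mem g hAF)
  apply Finset.eq_of_subset_of_card_le hFsub
  rw [Finset.card_powersetCard, Nat.card_Icc, hcard]
  simp
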